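/- arXiv:2603.28031 — 2 statements merged into one kernel-verified Lean document; each statement's English description precedes it below -/
import Mathlib

section
/- Let 1 ≤ s ≤ m, k ≥ 1, d' < k, and fix a layer assignment f into d' layers with uninformed-link set U. For a chain drawn from the random (k,m,s)-distribution and any deterministic message-augmented d'-layer strategy of width w with per-link message sizes (b_ℓ)_{ℓ∈U}, the probability that some candidate tuple lies in Spec_cg is at most w · Π_{ℓ∈U} min(1, 2^{b_ℓ} · s/m). -/
set_option maxHeartbeats 1000000



/-!
A `k`-position constraint chain over `[m]` with sparsity `s` (positions are
0-indexed as `Fin k`; the link `ℓ-1 → ℓ` is represented by the index `ℓ` with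
`0 < ℓ.val`; the field `row ℓ a` is the successor set `P_ℓ(a)`, meaningful for
`0 < ℓ.val`).
-/
structure ConstraintChain (k m s : ℕ) where
  P1 : Finset (Fin m)
  row : Fin k → Fin m → Finset (Fin m)
  card_P1 : P1.card = s
  card_row : ∀ ℓ a, (row ℓ a).card = s

namespace ConstraintChain

/-- The predecessor position of `ℓ`. -/
def pred {k : ℕ} (ℓ : Fin k) : Fin k :=
  ⟨ℓ.val - 1, Nat.lt_of_le_of_lt (Nat.sub_le _ _) ℓ.isLt⟩

/-- Membership of the tuple `v` in the admissible set `Spec_cg` of the chain. -/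
def InSpec {k m s : ℕ} (c : ConstraintChain k m s) (v : Fin k → Fin m) : Prop :=
  (∀ h : 0 < k, v ⟨0, h⟩ ∈ c.P1) ∧
    ∀ ℓ : Fin k, 0 < ℓ.val → v ℓ ∈ c.row ℓ (v (pred ℓ))

end ConstraintChain

/-- Link `ℓ` is informed under the layer assignment `f`:
its predecessor is placed in a strictly earlier layer. -/
abbrev Informed {k d' : ℕ} (f : Fin k → Fin d') (ℓ : Fin k) : Prop :=
  0 < ℓ.val ∧ f (ConstraintChain.pred ℓ) < f ℓ

/-- Link `ℓ` is uninformed under the layer assignment `f`. -/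
abbrev Uninformed {k d' : ℕ} (f : Fin k → Fin d') (ℓ : Fin k) : Prop :=
  0 < ℓ.val ∧ ¬ f (ConstraintChain.pred ℓ) < f ℓ

namespace Stmt5Aux

abbrev SubS (m s : ℕ) : Type := {t : Finset (Fin m) // t.card = s}
abbrev Row (m s : ℕ) : Type := Fin m → SubS m s
abbrev Usub {k d' : ℕ} (f : Fin k → Fin d') : Type := {ℓ : Fin k // Uninformed f ℓ}
abbrev Ksub {k d' : ℕ} (m s : ℕ) (f : Fin k → Fin d') : Type :=
  SubS m s × ({ℓ : Fin k // ¬ Uninformed f ℓ} → Row m s)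

variable {k m s d' w : ℕ} (f : Fin k → Fin d')

def build (x : Ksub m s f) (g : Usub f → Row m s) : ConstraintChain k m s where
  P1 := x.1.1
  row := fun ℓ a => if h : Uninformed f ℓ then (g ⟨ℓ, h⟩ a).1 else (x.2 ⟨ℓ, h⟩ a).1
  card_P1 := x.1.2
  card_row := fun ℓ a => by
    beta_reduce
    by_cases h : Uninformed f ℓ
    · rw [dif_pos h]; exact (g ⟨ℓ, h⟩ a).2
    · rw [dif_neg h]; exact (x.2 ⟨ℓ, h⟩ a).2

lemma build_row_of_uninformed (x : Ksub m s f) (g : Usub f → Row m s)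
    {ℓ : Fin k} (h : Uninformed f ℓ) (a : Fin m) :
    (build f x g).row ℓ a = (g ⟨ℓ, h⟩ a).1 := dif_pos h

lemma build_row_of_not_uninformed (x : Ksub m s f) (g : Usub f → Row m s)
    {ℓ : Fin k} (h : ¬ Uninformed f ℓ) (a : Fin m) :
    (build f x g).row ℓ a = (x.2 ⟨ℓ, h⟩ a).1 := dif_neg h

def buildEquiv : (Ksub m s f × (Usub f → Row m s)) ≃ ConstraintChain k m s where
  toFun p := build f p.1 p.2
  invFun c := (⟨⟨c.P1, c.card_P1⟩, fun ℓ a => ⟨c.row ℓ.1 a, c.card_row _ _⟩⟩,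
    fun ℓ a => ⟨c.row ℓ.1 a, c.card_row _ _⟩)
  left_inv p := by
    obtain ⟨⟨x1, x2⟩, g⟩ := p
    refine Prod.ext (Prod.ext (Subtype.ext rfl) ?_) ?_
    · funext ℓ a
      exact Subtype.ext (build_row_of_not_uninformed f _ _ ℓ.2 a)
    · funext ℓ a
      exact Subtype.ext (build_row_of_uninformed f _ _ ℓ.2 a)
  right_inv c := by
    obtain ⟨P1, row, h1, h2⟩ := c
    simp only [build, ConstraintChain.mk.injEq, true_and]
    funext ℓ a
    split <;> rfl

variable (F : Fin k → Type) (M : ∀ ℓ : Fin k, (Fin m → Finset (Fin m)) → F ℓ)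
  (V : ConstraintChain k m s → Fin w → Fin k → Fin m)

/-- The message vector of an assignment of rows to uninformed links. -/
def msgOf (g : Usub f → Row m s) : ∀ i : Usub f, F i.1 :=
  fun i => M i.1 (fun a => (g i a).1)

open Classical in
/-- The candidate tuple as a function of the known part and the messages. -/
noncomputable def vfun (hm : 0 < m) (x : Ksub m s f) (j : Fin w)
    (μ : ∀ i : Usub f, F i.1) : Fin k → Fin m :=
  if h : ∃ g : Usub f → Row m s, msgOf f F M g = μ
  then V (build f x h.choose) j else fun _ => ⟨0, hm⟩

lemma vfun_spec
    (hV : ∀ c c' : ConstraintChain k m s, c.P1 = c'.P1 →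
      (∀ ℓ : Fin k, Informed f ℓ → ∀ a : Fin m, c.row ℓ a = c'.row ℓ a) →
      (∀ ℓ : Fin k, Uninformed f ℓ → M ℓ (c.row ℓ) = M ℓ (c'.row ℓ)) →
      V c = V c')
    (hm : 0 < m) (x : Ksub m s f) (j : Fin w) (g : Usub f → Row m s) :
    vfun f F M V hm x j (msgOf f F M g) = V (build f x g) j := by
  rw [vfun, dif_pos ⟨g, rfl⟩]
  have hch := (⟨g, rfl⟩ : ∃ g' : Usub f → Row m s,
    msgOf f F M g' = msgOf f F M g).choose_spec
  set g' := (⟨g, rfl⟩ : ∃ g' : Usub f → Row m s,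
    msgOf f F M g' = msgOf f F M g).choose with hg'
  have := hV (build f x g') (build f x g) rfl
    (fun ℓ hℓ a => by
      have hn : ¬ Uninformed f ℓ := fun hu => hu.2 hℓ.2
      rw [build_row_of_not_uninformed f x g' hn, build_row_of_not_uninformed f x g hn])
    (fun ℓ hℓ => by
      have h1 : (build f x g').row ℓ = fun a => (g' ⟨ℓ, hℓ⟩ a).1 :=
        funext fun a => build_row_of_uninformed f x g' hℓ a
      have h2 : (build f x g).row ℓ = fun a => (g ⟨ℓ, hℓ⟩ a).1 :=
        funext fun a => build_row_of_uninformed f x g hℓ a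
      rw [h1, h2]
      exact congrFun hch ⟨ℓ, hℓ⟩)
  exact congrFun this j

end Stmt5Aux

/-- Cardinality bound: sized subsets containing a fixed element. -/
lemma card_contains_le {m s : ℕ} (x0 : Fin m) :
    (Finset.univ.filter (fun t : Stmt5Aux.SubS m s => x0 ∈ t.1)).card
      ≤ (m - 1).choose (s - 1) := by
  classical
  rw [← Fintype.card_subtype]
  have hinj : Function.Injective
      (fun t : {t : Stmt5Aux.SubS m s // x0 ∈ t.1} =>
        (⟨t.1.1.erase x0, by
          rw [Finset.mem_powersetCard]
          exact ⟨Finset.erase_subset_erase _ (Finset.subset_univ _),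
            by rw [Finset.card_erase_of_mem t.2, t.1.2]⟩⟩ :
          (Finset.powersetCard (s - 1) (Finset.univ.erase x0) : Finset (Finset (Fin m))))) := by
    intro t u h
    have h' : t.1.1.erase x0 = u.1.1.erase x0 := congrArg Subtype.val h
    have : t.1.1 = u.1.1 := by
      rw [← Finset.insert_erase t.2, ← Finset.insert_erase u.2, h']
    exact Subtype.ext (Subtype.ext this)
  calc Fintype.card {t : Stmt5Aux.SubS m s // x0 ∈ t.1}
      ≤ Fintype.card (Finset.powersetCard (s - 1) (Finset.univ.erase x0) :
          Finset (Finset (Fin m))) := Fintype.card_le_of_injective _ hinj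
    _ = (m - 1).choose (s - 1) := by
        rw [Fintype.card_coe, Finset.card_powersetCard, Finset.card_erase_of_mem
          (Finset.mem_univ _), Finset.card_univ, Fintype.card_fin]

lemma choose_identity {m s : ℕ} (hs : 1 ≤ s) (hsm : s ≤ m) :
    m * (m - 1).choose (s - 1) = m.choose s * s := by
  obtain ⟨m', rfl⟩ := Nat.exists_eq_succ_of_ne_zero (by omega : m ≠ 0)
  obtain ⟨s', rfl⟩ := Nat.exists_eq_succ_of_ne_zero (by omega : s ≠ 0)
  simpa using Nat.add_one_mul_choose_eq m' s'

lemma card_filter_prod {α β : Type*} [Fintype α] [Fintype β] [DecidableEq α]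
    (P : α × β → Prop) [DecidablePred P] :
    (Finset.univ.filter P).card = ∑ x : α, (Finset.univ.filter fun y => P (x, y)).card := by
  classical
  rw [Finset.card_eq_sum_card_fiberwise (f := Prod.fst) (t := Finset.univ)
    (fun p _ => Finset.mem_univ _)]
  refine Finset.sum_congr rfl fun x _ => ?_
  refine Finset.card_bij' (fun p _ => p.2) (fun y _ => (x, y)) ?_ ?_ ?_ ?_
  · intro p hp
    rw [Finset.mem_filter, Finset.mem_filter] at hp
    obtain ⟨⟨_, h1⟩, h2⟩ := hp
    obtain ⟨p1, p2⟩ := p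
    obtain rfl : p1 = x := h2
    exact Finset.mem_filter.mpr ⟨Finset.mem_univ _, h1⟩
  · intro y hy
    rw [Finset.mem_filter] at hy
    exact Finset.mem_filter.mpr ⟨Finset.mem_filter.mpr ⟨Finset.mem_univ _, hy.2⟩, rfl⟩
  · intro p hp
    rw [Finset.mem_filter, Finset.mem_filter] at hp
    obtain ⟨p1, p2⟩ := p
    obtain rfl : p1 = x := hp.2
    rfl
  · intro y hy; rfl

open Finset in

/-- Abstract per-link counting lemma. -/
lemma count_core {ι : Type*} [Fintype ι] [DecidableEq ι] {R : Type*} [Fintype R]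
    [DecidableEq R] {F : ι → Type*} [∀ i, Fintype (F i)] [∀ i, DecidableEq (F i)]
    (M : ∀ i, R → F i) (Q : ∀ i, (∀ j, F j) → R → Prop) [∀ i μ, DecidablePred (Q i μ)]
    (c : ι → ℕ) (hc : ∀ i μ, (univ.filter (fun r => Q i μ r)).card ≤ c i) :
    (univ.filter (fun g : ι → R => ∀ i, Q i (fun j => M j (g j)) (g i))).card
      ≤ ∏ i, min (Fintype.card R) (Fintype.card (F i) * c i) := by
  classical
  set msg : (ι → R) → (∀ j, F j) := fun g j => M j (g j) with hmsg
  rw [Finset.card_eq_sum_card_fiberwise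
    (f := msg) (t := univ) (fun g _ => mem_univ _)]
  have h2 : ∀ μ : ∀ j, F j,
      ((univ.filter (fun g : ι → R => ∀ i, Q i (msg g) (g i))).filter
          (fun g => msg g = μ)).card
        ≤ ∏ i, min ((univ.filter (fun r : R => M i r = μ i)).card) (c i) := by
    intro μ
    rw [Finset.filter_filter]
    have heq : (univ.filter (fun g : ι → R => (∀ i, Q i (msg g) (g i)) ∧ msg g = μ))
        = Fintype.piFinset (fun i => univ.filter (fun r : R => Q i μ r ∧ M i r = μ i)) := by
      ext g
      simp only [mem_filter, mem_univ, true_and, Fintype.mem_piFinset]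
      constructor
      · rintro ⟨hq, hm⟩ i
        exact ⟨hm ▸ hq i, congrFun hm i⟩
      · intro h
        have hm : msg g = μ := funext fun i => (h i).2
        exact ⟨fun i => by rw [hm]; exact (h i).1, hm⟩
    rw [heq, Fintype.card_piFinset]
    refine Finset.prod_le_prod' fun i _ => ?_
    refine Nat.le_min.mpr ⟨?_, ?_⟩
    · exact Finset.card_le_card (Finset.monotone_filter_right _ (fun r _ hr => hr.2))
    · exact le_trans (Finset.card_le_card
        (Finset.monotone_filter_right _ (fun r _ hr => hr.1))) (hc i μ)
  calc ∑ μ : ∀ j, F j, ((univ.filter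
          (fun g : ι → R => ∀ i, Q i (msg g) (g i))).filter (fun g => msg g = μ)).card
      ≤ ∑ μ : ∀ j, F j, ∏ i, min ((univ.filter (fun r : R => M i r = μ i)).card) (c i) :=
        Finset.sum_le_sum fun μ _ => h2 μ
    _ = ∏ i, ∑ v : F i, min ((univ.filter (fun r : R => M i r = v)).card) (c i) :=
        (Fintype.prod_sum (fun i v => min ((univ.filter (fun r : R => M i r = v)).card) (c i))).symm
    _ ≤ ∏ i, min (Fintype.card R) (Fintype.card (F i) * c i) := by
        refine Finset.prod_le_prod' fun i _h => ?_
        refine Nat.le_min.mpr ⟨?_, ?_⟩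
        · calc ∑ v : F i, min ((univ.filter (fun r : R => M i r = v)).card) (c i)
              ≤ ∑ v : F i, (univ.filter (fun r : R => M i r = v)).card :=
                Finset.sum_le_sum fun v _ => min_le_left _ _
            _ = Fintype.card R := by
                rw [← Finset.card_univ, Finset.card_eq_sum_card_fiberwise
                  (f := M i) (t := univ) (fun r _ => mem_univ _)]
        · calc ∑ v : F i, min ((univ.filter (fun r : R => M i r = v)).card) (c i)
              ≤ ∑ _v : F i, c i := Finset.sum_le_sum fun v _ => min_le_right _ _
            _ = Fintype.card (F i) * c i := by
                rw [Finset.sum_const, smul_eq_mul, Finset.card_univ]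

/-- Counting functions constrained at one coordinate. -/
lemma count_eval {ι β : Type*} [Fintype ι] [DecidableEq ι] [Fintype β] [DecidableEq β]
    (a : ι) (P : β → Prop) [DecidablePred P] :
    (Finset.univ.filter (fun g : ι → β => P (g a))).card
      = (Finset.univ.filter P).card * Fintype.card β ^ (Fintype.card ι - 1) := by
  classical
  have e : {g : ι → β // P (g a)} ≃ {x : β // P x} × ({ j // j ≠ a } → β) :=
    ((Equiv.funSplitAt a β).subtypeEquiv (fun g => Iff.rfl)).trans
      Equiv.prodSubtypeFstEquivSubtypeProd
  have h1 : (Finset.univ.filter (fun g : ι → β => P (g a))).card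
      = Fintype.card {g : ι → β // P (g a)} := (Fintype.card_subtype _).symm
  rw [h1, Fintype.card_congr e, Fintype.card_prod, Fintype.card_subtype,
    Fintype.card_fun]
  congr 2
  simp [Fintype.card_subtype_compl]

open Finset Stmt5Aux in
lemma hc_lemma {m s : ℕ} (a x0 : Fin m) :
    (Finset.univ.filter (fun r : Row m s => x0 ∈ (r a).1)).card
      ≤ (m - 1).choose (s - 1) * (Fintype.card (SubS m s)) ^ (m - 1) := by
  classical
  have h := count_eval (ι := Fin m) (β := SubS m s) a (fun t => x0 ∈ t.1)
  rw [Fintype.card_fin] at h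
  rw [h]
  exact Nat.mul_le_mul_right _ (card_contains_le x0)


open Finset Stmt5Aux in
/-- (Per-link success bound for message-augmented strategies.)
For a chain drawn from the random `(k,m,s)`-distribution and any deterministic
message-augmented `d'`-layer strategy of width `w` with per-link message sizes
`b ℓ`, the probability that some candidate tuple lies in `Spec_cg` is at most
`w · Π_{ℓ ∈ U} min(1, 2^(b ℓ) · s/m)`, where `U` is the set of uninformed
links. -/
theorem stmt5
    {k m s d' w : ℕ} (hs : 1 ≤ s) (hsm : s ≤ m) (hk : 1 ≤ k) (hd : d' < k)
    (f : Fin k → Fin d') (b : Fin k → ℕ)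
    (F : Fin k → Type) [∀ ℓ, Fintype (F ℓ)]
    (hF : ∀ ℓ : Fin k, Uninformed f ℓ → Fintype.card (F ℓ) ≤ 2 ^ (b ℓ))
    (M : ∀ ℓ : Fin k, (Fin m → Finset (Fin m)) → F ℓ)
    (V : ConstraintChain k m s → Fin w → Fin k → Fin m)
    (hV : ∀ c c' : ConstraintChain k m s, c.P1 = c'.P1 →
      (∀ ℓ : Fin k, Informed f ℓ → ∀ a : Fin m, c.row ℓ a = c'.row ℓ a) →
      (∀ ℓ : Fin k, Uninformed f ℓ → M ℓ (c.row ℓ) = M ℓ (c'.row ℓ)) →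
      V c = V c') :
    (Nat.card {c : ConstraintChain k m s // ∃ j : Fin w, c.InSpec (V c j)} : ℝ) /
        (Nat.card (ConstraintChain k m s) : ℝ) ≤
      (w : ℝ) * ∏ ℓ ∈ Finset.univ.filter (fun ℓ : Fin k => Uninformed f ℓ),
        min 1 ((2 : ℝ) ^ (b ℓ) * (s : ℝ) / (m : ℝ)) := by
  classical
  have hm : 0 < m := lt_of_lt_of_le hs hsm
  set U : Finset (Fin k) := Finset.univ.filter (fun ℓ : Fin k => Uninformed f ℓ) with hU
  set crow : ℕ := (m - 1).choose (s - 1) * (Fintype.card (SubS m s)) ^ (m - 1) with hcrow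
  -- nonemptiness
  obtain ⟨t0, -, ht0⟩ := Finset.exists_subset_card_eq
    (show s ≤ (Finset.univ : Finset (Fin m)).card by simpa using hsm)
  haveI : Nonempty (SubS m s) := ⟨⟨t0, ht0⟩⟩
  -- cardinalities
  have hN : Nat.card (ConstraintChain k m s)
      = Fintype.card (Ksub m s f) * Fintype.card (Row m s) ^ U.card := by
    rw [Nat.card_congr (buildEquiv f).symm, Nat.card_eq_fintype_card,
      Fintype.card_prod, Fintype.card_fun]
    congr 2
    rw [Fintype.card_subtype]
  have hBad : (Nat.card {c : ConstraintChain k m s // ∃ j : Fin w, c.InSpec (V c j)})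
      = (Finset.univ.filter (fun p : Ksub m s f × (Usub f → Row m s) =>
          ∃ j : Fin w, (build f p.1 p.2).InSpec (V (build f p.1 p.2) j))).card := by
    rw [Nat.card_congr ((buildEquiv f).subtypeEquiv (fun p => Iff.rfl)).symm,
      Nat.card_eq_fintype_card, Fintype.card_subtype]
    exact congrArg Finset.card (Finset.filter_congr fun p _ => Iff.rfl)
  -- the per-candidate, per-known-part counting bound
  have key : ∀ (j : Fin w) (x : Ksub m s f),
      (Finset.univ.filter (fun g : Usub f → Row m s =>
        ∀ ℓ : Fin k, Uninformed f ℓ → V (build f x g) j ℓ ∈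
          (build f x g).row ℓ (V (build f x g) j (ConstraintChain.pred ℓ)))).card
      ≤ ∏ ℓ ∈ U, min (Fintype.card (Row m s)) (2 ^ (b ℓ) * crow) := by
    intro j x
    have hcore := count_core (ι := Usub f) (R := Row m s) (F := fun i => F i.1)
      (fun i r => M i.1 (fun a => (r a).1))
      (fun i μ r => vfun f F M V hm x j μ i.1 ∈
        (r (vfun f F M V hm x j μ (ConstraintChain.pred i.1))).1)
      (fun _ => crow)
      (fun i μ => hc_lemma _ _)
    have hfilter : (Finset.univ.filter (fun g : Usub f → Row m s =>
        ∀ ℓ : Fin k, Uninformed f ℓ → V (build f x g) j ℓ ∈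
          (build f x g).row ℓ (V (build f x g) j (ConstraintChain.pred ℓ))))
        = (Finset.univ.filter (fun g : Usub f → Row m s =>
            ∀ i : Usub f, vfun f F M V hm x j (msgOf f F M g) i.1 ∈
              (g i (vfun f F M V hm x j (msgOf f F M g)
                (ConstraintChain.pred i.1))).1)) := by
      refine Finset.filter_congr fun g _ => ?_
      have hv : vfun f F M V hm x j (msgOf f F M g) = V (build f x g) j :=
        vfun_spec f F M V hV hm x j g
      rw [hv]
      constructor
      · intro h i
        have h2 := h i.1 i.2
        rwa [build_row_of_uninformed f x g i.2] at h2
      · intro h ℓ hℓ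
        have h2 := h ⟨ℓ, hℓ⟩
        rwa [build_row_of_uninformed f x g hℓ]
    rw [hfilter]
    refine le_trans hcore ?_
    have hconv : ∏ ℓ ∈ U, min (Fintype.card (Row m s)) (2 ^ (b ℓ) * crow)
        = ∏ i : Usub f, min (Fintype.card (Row m s)) (2 ^ (b i.1) * crow) :=
      Finset.prod_subtype U (by simp [hU]) _
    rw [hconv]
    refine Finset.prod_le_prod' fun i _ => ?_
    exact min_le_min le_rfl (Nat.mul_le_mul_right _ (hF i.1 i.2))
  -- per-candidate bound, summed over the known part
  have perj : ∀ j : Fin w,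
      (Finset.univ.filter (fun p : Ksub m s f × (Usub f → Row m s) =>
        (build f p.1 p.2).InSpec (V (build f p.1 p.2) j))).card
      ≤ Fintype.card (Ksub m s f) *
          ∏ ℓ ∈ U, min (Fintype.card (Row m s)) (2 ^ (b ℓ) * crow) := by
    intro j
    have hsub : (Finset.univ.filter (fun p : Ksub m s f × (Usub f → Row m s) =>
        (build f p.1 p.2).InSpec (V (build f p.1 p.2) j)))
        ⊆ (Finset.univ.filter (fun p : Ksub m s f × (Usub f → Row m s) =>
          ∀ ℓ : Fin k, Uninformed f ℓ → V (build f p.1 p.2) j ℓ ∈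
            (build f p.1 p.2).row ℓ (V (build f p.1 p.2) j (ConstraintChain.pred ℓ)))) :=
      Finset.monotone_filter_right _ (fun p _ hp ℓ hℓ => hp.2 ℓ hℓ.1)
    refine le_trans (Finset.card_le_card hsub) ?_
    rw [card_filter_prod]
    calc ∑ x : Ksub m s f, (Finset.univ.filter (fun g : Usub f → Row m s =>
          ∀ ℓ : Fin k, Uninformed f ℓ → V (build f x g) j ℓ ∈
            (build f x g).row ℓ (V (build f x g) j (ConstraintChain.pred ℓ)))).card
        ≤ ∑ _x : Ksub m s f,
            ∏ ℓ ∈ U, min (Fintype.card (Row m s)) (2 ^ (b ℓ) * crow) :=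
          Finset.sum_le_sum fun x _ => key j x
      _ = _ := by rw [Finset.sum_const, smul_eq_mul, Finset.card_univ]
  -- union bound
  have hBadCard : (Finset.univ.filter (fun p : Ksub m s f × (Usub f → Row m s) =>
      ∃ j : Fin w, (build f p.1 p.2).InSpec (V (build f p.1 p.2) j))).card
      ≤ w * (Fintype.card (Ksub m s f) *
          ∏ ℓ ∈ U, min (Fintype.card (Row m s)) (2 ^ (b ℓ) * crow)) := by
    have hsub2 : (Finset.univ.filter (fun p : Ksub m s f × (Usub f → Row m s) =>
        ∃ j : Fin w, (build f p.1 p.2).InSpec (V (build f p.1 p.2) j)))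
        ⊆ Finset.univ.biUnion (fun j : Fin w =>
            Finset.univ.filter (fun p : Ksub m s f × (Usub f → Row m s) =>
              (build f p.1 p.2).InSpec (V (build f p.1 p.2) j))) := fun p hp =>
      Finset.mem_biUnion.mpr ⟨(Finset.mem_filter.mp hp).2.choose, Finset.mem_univ _,
        Finset.mem_filter.mpr ⟨Finset.mem_univ _, (Finset.mem_filter.mp hp).2.choose_spec⟩⟩
    refine le_trans (Finset.card_le_card hsub2) ?_
    refine le_trans (Finset.card_biUnion_le) ?_
    calc ∑ j : Fin w, (Finset.univ.filter (fun p : Ksub m s f × (Usub f → Row m s) =>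
            (build f p.1 p.2).InSpec (V (build f p.1 p.2) j))).card
          ≤ ∑ _j : Fin w, Fintype.card (Ksub m s f) *
              ∏ ℓ ∈ U, min (Fintype.card (Row m s)) (2 ^ (b ℓ) * crow) :=
            Finset.sum_le_sum fun j _ => perj j
        _ = _ := by rw [Finset.sum_const, smul_eq_mul, Finset.card_univ, Fintype.card_fin]
  -- the key numeric relation
  have hkey_nat : m * crow ≤ s * Fintype.card (Row m s) := by
    refine le_of_eq ?_
    have h1 : Fintype.card (SubS m s) = m.choose s := by
      rw [Fintype.card_finset_len, Fintype.card_fin]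
    have h2 : Fintype.card (Row m s) = Fintype.card (SubS m s) ^ m := by
      rw [Fintype.card_fun, Fintype.card_fin]
    have h3 : Fintype.card (SubS m s) ^ m
        = Fintype.card (SubS m s) ^ (m - 1) * Fintype.card (SubS m s) := by
      rw [← pow_succ]
      congr 1
      omega
    calc m * crow = (m * (m - 1).choose (s - 1)) * Fintype.card (SubS m s) ^ (m - 1) := by
          rw [hcrow]; ring
      _ = (m.choose s * s) * Fintype.card (SubS m s) ^ (m - 1) := by
          rw [choose_identity hs hsm]
      _ = s * (Fintype.card (SubS m s) ^ (m - 1) * m.choose s) := by ring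
      _ = s * Fintype.card (Row m s) := by rw [h2, h3, h1]
  -- positivity
  have hRowpos : 0 < Fintype.card (Row m s) := Fintype.card_pos
  have hKpos : 0 < Fintype.card (Ksub m s f) := Fintype.card_pos
  have hNpos : (0 : ℝ) < (Nat.card (ConstraintChain k m s) : ℝ) := by
    rw [hN]
    positivity
  -- final real-number computation
  rw [div_le_iff₀ hNpos, hBad, hN]
  have hcast := hBadCard
  have hR0 : (0 : ℝ) ≤ (Fintype.card (Row m s) : ℝ) := by positivity
  calc ((Finset.univ.filter (fun p : Ksub m s f × (Usub f → Row m s) =>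
        ∃ j : Fin w, (build f p.1 p.2).InSpec (V (build f p.1 p.2) j))).card : ℝ)
      ≤ (w : ℝ) * ((Fintype.card (Ksub m s f) : ℝ) *
          ∏ ℓ ∈ U, ((min (Fintype.card (Row m s)) (2 ^ (b ℓ) * crow) : ℕ) : ℝ)) := by
        have := hBadCard
        push_cast
        exact_mod_cast Nat.cast_le.mpr hBadCard
      _ ≤ (w : ℝ) * ((Fintype.card (Ksub m s f) : ℝ) *
          ∏ ℓ ∈ U, (min 1 ((2 : ℝ) ^ (b ℓ) * (s : ℝ) / (m : ℝ)) *
            (Fintype.card (Row m s) : ℝ))) := by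
        refine mul_le_mul_of_nonneg_left (mul_le_mul_of_nonneg_left
          (Finset.prod_le_prod (fun ℓ _ => by positivity) (fun ℓ _ => ?_))
          (by positivity)) (by positivity)
        -- per-factor inequality
        set q : ℝ := (2 : ℝ) ^ (b ℓ) * (s : ℝ) / (m : ℝ) with hq
        have hmul : min (1 : ℝ) q * (Fintype.card (Row m s) : ℝ)
            = min ((Fintype.card (Row m s) : ℝ)) (q * (Fintype.card (Row m s) : ℝ)) := by
          rcases le_total (1 : ℝ) q with h | h
          · rw [min_eq_left h, one_mul, min_eq_left]
            nlinarith
          · rw [min_eq_right h, min_eq_right]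
            nlinarith
        rw [hmul]
        push_cast
        refine min_le_min le_rfl ?_
        -- 2^b * crow ≤ q * cardRow
        have hcrowR : (crow : ℝ) * m ≤ (s : ℝ) * (Fintype.card (Row m s) : ℝ) := by
          have h := (Nat.cast_le (α := ℝ)).mpr hkey_nat
          push_cast at h
          linarith
        have hmpos : (0 : ℝ) < (m : ℝ) := by positivity
        rw [hq]
        rw [div_mul_eq_mul_div, le_div_iff₀ hmpos]
        calc (2 : ℝ) ^ (b ℓ) * (crow : ℝ) * (m : ℝ)
            = (2 : ℝ) ^ (b ℓ) * ((crow : ℝ) * (m : ℝ)) := by ring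
          _ ≤ (2 : ℝ) ^ (b ℓ) * ((s : ℝ) * (Fintype.card (Row m s) : ℝ)) := by
              refine mul_le_mul_of_nonneg_left hcrowR (by positivity)
          _ = (2 : ℝ) ^ (b ℓ) * (s : ℝ) * (Fintype.card (Row m s) : ℝ) := by ring
      _ = ((w : ℝ) * ∏ ℓ ∈ U, min 1 ((2 : ℝ) ^ (b ℓ) * (s : ℝ) / (m : ℝ))) *
          ((Fintype.card (Ksub m s f) : ℝ) * (Fintype.card (Row m s) : ℝ) ^ U.card) := by
        rw [Finset.prod_mul_distrib, Finset.prod_const]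
        ring
      _ = _ := by push_cast; ring
end

section
/- Fix integers m, s with 1 ≤ s ≤ m and an integer b ≥ 0. Let 𝒮 be the family of s-element subsets of [m], let P be uniformly distributed over the set of all functions from [m] to 𝒮 (equivalently, the m rows P(1),…,P(m) are independent, each uniform on 𝒮), let F be a finite set with |F| ≤ 2^b, let M be any function from 𝒮^{[m]} to F, and let h : F → [m] × [m] be any function. Write (h₁, h₂) for the components of h. Then Pr[h₂(M(P)) ∈ P(h₁(M(P)))] ≤ 2^b · s/m. -/
open Finset

abbrev Sfam (m s : ℕ) := {R : Finset (Fin m) // R.card = s}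

-- count of s-subsets containing a fixed element
lemma card_contains (m s : ℕ) (hs : 1 ≤ s) (a : Fin m) :
    Fintype.card {R : Sfam m s // a ∈ R.val} = (m - 1).choose (s - 1) := by
  have : Fintype.card {R : Sfam m s // a ∈ R.val}
      = (univ.filter (fun R : Finset (Fin m) => R.card = s ∧ a ∈ R)).card := by
    rw [Fintype.card_congr
      (Equiv.subtypeSubtypeEquivSubtypeInter (fun R : Finset (Fin m) => R.card = s)
        (fun R => a ∈ R)), Fintype.card_subtype]
  rw [this]
  have : (univ.filter (fun R : Finset (Fin m) => R.card = s ∧ a ∈ R)).card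
      = ((univ.erase a).powersetCard (s-1)).card := by
    refine Finset.card_bij' (fun R _ => R.erase a) (fun T _ => insert a T) ?_ ?_ ?_ ?_
    · intro R hR
      simp only [mem_filter] at hR
      rw [Finset.mem_powersetCard]
      exact ⟨Finset.erase_subset_erase a (Finset.subset_univ R),
        by rw [Finset.card_erase_of_mem hR.2.2, hR.2.1]⟩
    · intro T hT
      rw [Finset.mem_powersetCard] at hT
      have haT : a ∉ T := fun hmem => (Finset.mem_erase.mp (hT.1 hmem)).1 rfl
      simp only [mem_filter, Finset.mem_univ, true_and]
      refine ⟨?_, Finset.mem_insert_self a T⟩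
      rw [Finset.card_insert_of_notMem haT, hT.2]
      omega
    · intro R hR
      simp only [mem_filter] at hR
      exact Finset.insert_erase hR.2.2
    · intro T hT
      rw [Finset.mem_powersetCard] at hT
      have haT : a ∉ T := fun hmem => (Finset.mem_erase.mp (hT.1 hmem)).1 rfl
      exact Finset.erase_insert haT
  rw [this, Finset.card_powersetCard, Finset.card_erase_of_mem (Finset.mem_univ a),
    Finset.card_univ, Fintype.card_fin]

-- count of P : Fin m → Sfam with a ∈ (P i)
lemma card_row (m s : ℕ) (hm : 1 ≤ m) (hs : 1 ≤ s) (i a : Fin m) :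
    Fintype.card {P : Fin m → Sfam m s // a ∈ (P i).val}
      = (m - 1).choose (s - 1) * (m.choose s) ^ (m - 1) := by
  have e : {P : Fin m → Sfam m s // a ∈ (P i).val}
      ≃ {R : Sfam m s // a ∈ R.val} × ({j : Fin m // j ≠ i} → Sfam m s) :=
    ((Equiv.funSplitAt i (Sfam m s)).subtypeEquiv (fun P => by simp)).trans
      Equiv.prodSubtypeFstEquivSubtypeProd
  rw [Fintype.card_congr e, Fintype.card_prod, card_contains m s hs a,
    Fintype.card_fun, Fintype.card_finset_len, Fintype.card_fin]
  congr 2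
  simp [Fintype.card_subtype_compl]

/-- (Message-decoding lemma, row-family form.) Let `𝒮` be the
family of `s`-element subsets of `[m]`, let `P` be uniform over all functions
`[m] → 𝒮` (equivalently, the rows `P(1), …, P(m)` are independent, each
uniform on `𝒮`), let `F` be finite with `|F| ≤ 2^b`, let `M : 𝒮^[m] → F` be
any message function, and let `h : F → [m] × [m]` be any decoder with
components `(h₁, h₂)`. Then `Pr[h₂(M(P)) ∈ P(h₁(M(P)))] ≤ 2^b · s/m`. -/
theorem stmt11 (m s b : ℕ) (hs : 1 ≤ s) (hsm : s ≤ m)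
    (F : Type) [Fintype F] (hF : Fintype.card F ≤ 2 ^ b)
    (M : (Fin m → {R : Finset (Fin m) // R.card = s}) → F)
    (h : F → Fin m × Fin m) :
    (Nat.card {P : Fin m → {R : Finset (Fin m) // R.card = s} //
          (h (M P)).2 ∈ (P (h (M P)).1).val} : ℝ) /
        (Nat.card (Fin m → {R : Finset (Fin m) // R.card = s}) : ℝ) ≤
      (2 ^ b : ℝ) * (s : ℝ) / (m : ℝ) := by
  classical
  have hm : 1 ≤ m := le_trans hs hsm
  obtain ⟨N, hN⟩ : ∃ N, N = m.choose s := ⟨_, rfl⟩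
  have hNpos : 0 < N := hN ▸ Nat.choose_pos hsm
  have hcardT : Nat.card (Fin m → Sfam m s) = N ^ m := by
    rw [Nat.card_eq_fintype_card, Fintype.card_fun, Fintype.card_finset_len,
      Fintype.card_fin, ← hN]
  -- bound the numerator
  have h1 : Nat.card {P : Fin m → Sfam m s // (h (M P)).2 ∈ (P (h (M P)).1).val}
      ≤ Fintype.card F * ((m - 1).choose (s - 1) * N ^ (m - 1)) := by
    rw [Nat.card_eq_fintype_card, Fintype.card_subtype]
    have hsub : (univ.filter (fun P : Fin m → Sfam m s =>
          (h (M P)).2 ∈ (P (h (M P)).1).val))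
        ⊆ univ.biUnion (fun f : F =>
            univ.filter (fun P : Fin m → Sfam m s => (h f).2 ∈ (P (h f).1).val)) := by
      intro P hP
      rw [Finset.mem_biUnion]
      exact ⟨M P, Finset.mem_univ _, by simpa using hP⟩
    calc (univ.filter (fun P : Fin m → Sfam m s =>
            (h (M P)).2 ∈ (P (h (M P)).1).val)).card
        ≤ (univ.biUnion (fun f : F =>
            univ.filter (fun P : Fin m → Sfam m s => (h f).2 ∈ (P (h f).1).val))).card :=
          Finset.card_le_card hsub
      _ ≤ ∑ f : F, (univ.filter (fun P : Fin m → Sfam m s =>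
            (h f).2 ∈ (P (h f).1).val)).card := Finset.card_biUnion_le
      _ = ∑ f : F, (m - 1).choose (s - 1) * N ^ (m - 1) := by
          refine Finset.sum_congr rfl (fun f _ => ?_)
          rw [← Fintype.card_subtype, card_row m s hm hs (h f).1 (h f).2, ← hN]
      _ = Fintype.card F * ((m - 1).choose (s - 1) * N ^ (m - 1)) := by
          rw [Finset.sum_const, Finset.card_univ, smul_eq_mul]
  have hmc : m * (m - 1).choose (s - 1) = s * N := by
    have := Nat.add_one_mul_choose_eq (m - 1) (s - 1)
    have e1 : m - 1 + 1 = m := Nat.succ_pred_eq_of_pos hm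
    have e2 : s - 1 + 1 = s := Nat.succ_pred_eq_of_pos hs
    rw [e1, e2] at this
    rw [this, hN, Nat.mul_comm]
  have key : Nat.card {P : Fin m → Sfam m s // (h (M P)).2 ∈ (P (h (M P)).1).val} * m
      ≤ 2 ^ b * s * N ^ m := by
    calc Nat.card {P : Fin m → Sfam m s // (h (M P)).2 ∈ (P (h (M P)).1).val} * m
        ≤ (Fintype.card F * ((m - 1).choose (s - 1) * N ^ (m - 1))) * m :=
          Nat.mul_le_mul_right m h1
      _ ≤ (2 ^ b * ((m - 1).choose (s - 1) * N ^ (m - 1))) * m :=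
          Nat.mul_le_mul_right m (Nat.mul_le_mul_right _ hF)
      _ = 2 ^ b * ((m * (m - 1).choose (s - 1)) * N ^ (m - 1)) := by ring
      _ = 2 ^ b * ((s * N) * N ^ (m - 1)) := by rw [hmc]
      _ = 2 ^ b * s * (N ^ (m - 1) * N ^ 1) := by ring
      _ = 2 ^ b * s * N ^ m := by
          rw [← pow_add, Nat.sub_add_cancel hm]
  have hTpos : (0 : ℝ) < (Nat.card (Fin m → Sfam m s) : ℝ) := by
    rw [hcardT]
    positivity
  have hmpos : (0 : ℝ) < (m : ℝ) := by exact_mod_cast hm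
  rw [div_le_div_iff₀ hTpos hmpos]
  have := key
  rw [← hcardT] at this
  exact_mod_cast this
end
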